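/- Let T be an n-tournament with n odd and Seidel adjacency matrix S. Then δ_T ≤ n(n−1)(n−3)(n+1)/96, with equality if and only if every off-diagonal entry of S² + n·I_n has absolute value 1, i.e. |S² + n·I_n| = J_n (the all-ones matrix), where |M| is the entrywise absolute value. -/

import Mathlib

open Finset Matrix

variable {V : Type*} [Fintype V] [DecidableEq V]

/-- A tournament given by a dominance function: `T i j = true` means `i` dominates `j`. -/
def IsTournament (T : V → V → Bool) : Prop :=
  (∀ i, T i i = false) ∧ ∀ i j, i ≠ j → T i j = !T j i

/-- The 0-1 adjacency matrix of a tournament. -/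
def adj (T : V → V → Bool) : Matrix V V ℤ :=
  Matrix.of fun i j => if T i j then 1 else 0

/-- The Seidel adjacency matrix `S = A - Aᵀ` of a tournament. -/
def seidel (T : V → V → Bool) : Matrix V V ℤ :=
  adj T - (adj T)ᵀ

/-- Number of 3-element subsets of `W` inducing a 3-cycle (each vertex dominates
exactly one other vertex of the triple). -/
def numC3On (T : V → V → Bool) (W : Finset V) : ℕ :=
  ((W.powersetCard 3).filter fun t => ∀ v ∈ t, (t.filter fun w => T v w).card = 1).card

/-- Number of 4-element subsets of `W` inducing a diamond, i.e. containing exactly one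
3-element subset that induces a 3-cycle. -/
def numDiamondsOn (T : V → V → Bool) (W : Finset V) : ℕ :=
  ((W.powersetCard 4).filter fun s =>
    ((s.powersetCard 3).filter fun t => ∀ v ∈ t, (t.filter fun w => T v w).card = 1).card
      = 1).card

/-- `δ_T`, the number of 4-element vertex subsets inducing a diamond. -/
def numDiamonds (T : V → V → Bool) : ℕ := numDiamondsOn T Finset.univ

/-- `c₃(T)`, the number of 3-element vertex subsets inducing a 3-cycle. -/
def numC3 (T : V → V → Bool) : ℕ := numC3On T Finset.univ

set_option linter.unusedSectionVars false
set_option linter.unusedVariables false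
set_option linter.unreachableTactic false
set_option linter.unusedTactic false
set_option maxHeartbeats 4000000

section Aux

variable {V : Type*} [Fintype V] [DecidableEq V]

/-! ### Basic facts about Seidel matrix entries -/

lemma seidel_apply (T : V → V → Bool) (i j : V) :
    seidel T i j = (if T i j then (1:ℤ) else 0) - (if T j i then (1:ℤ) else 0) := by
  simp [seidel, adj, Matrix.sub_apply, Matrix.transpose_apply]

lemma seidel_diag (T : V → V → Bool) (i : V) : seidel T i i = 0 := by
  simp [seidel_apply]

lemma seidel_eq {T : V → V → Bool} (hT : IsTournament T) {i j : V} (h : i ≠ j) :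
    seidel T i j = if T i j then (1:ℤ) else -1 := by
  have := hT.2 i j h
  rcases hb : T j i <;> rw [seidel_apply] <;> simp_all

lemma seidel_mul_self {T : V → V → Bool} (hT : IsTournament T) {i j : V} (h : i ≠ j) :
    seidel T i j * seidel T i j = 1 := by
  rw [seidel_eq hT h]; rcases hb : T i j <;> simp

lemma seidel_mul_rev {T : V → V → Bool} (hT : IsTournament T) {i j : V} (h : i ≠ j) :
    seidel T i j * seidel T j i = -1 := by
  have h2 := hT.2 i j h
  rw [seidel_eq hT h, seidel_eq hT h.symm]
  rcases hb : T j i <;> simp_all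

lemma seidel_anti {T : V → V → Bool} (hT : IsTournament T) (i j : V) :
    seidel T j i = - seidel T i j := by
  simp only [seidel, adj, Matrix.sub_apply, Matrix.transpose_apply, Matrix.of_apply]
  ring

/-! ### 3-cycles via Booleans -/

def cyc3 (T : V → V → Bool) (x y z : V) : Bool :=
  (T x y && T y z && T z x) || (T y x && T z y && T x z)

lemma card_filter_triple (p : V → Prop) [DecidablePred p] {x y z : V}
    (hxy : x ≠ y) (hxz : x ≠ z) (hyz : y ≠ z) :
    (({x, y, z} : Finset V).filter p).card
      = (if p x then 1 else 0) + (if p y then 1 else 0) + (if p z then 1 else 0) := by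
  rw [Finset.card_filter]
  rw [show ({x, y, z} : Finset V) = insert x (insert y {z}) from rfl]
  rw [Finset.sum_insert (by simp [hxy, hxz]), Finset.sum_insert (by simp [hyz]),
    Finset.sum_singleton, add_assoc]

lemma cyc_iff {T : V → V → Bool} (hT : IsTournament T) {x y z : V}
    (hxy : x ≠ y) (hxz : x ≠ z) (hyz : y ≠ z) :
    (∀ v ∈ ({x, y, z} : Finset V), (({x, y, z} : Finset V).filter fun w => T v w).card = 1)
      ↔ cyc3 T x y z = true := by
  have hx := hT.1 x; have hy := hT.1 y; have hz := hT.1 z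
  have e1 := hT.2 y x hxy.symm
  have e2 := hT.2 z x hxz.symm
  have e3 := hT.2 z y hyz.symm
  simp only [Finset.mem_insert, Finset.mem_singleton, forall_eq_or_imp, forall_eq]
  rw [card_filter_triple _ hxy hxz hyz, card_filter_triple _ hxy hxz hyz,
    card_filter_triple _ hxy hxz hyz]
  rcases h1 : T x y <;> rcases h2 : T y z <;> rcases h3 : T x z <;>
    simp_all [cyc3]

/-! ### small cards -/

lemma card3 {x y z : V} (hxy : x ≠ y) (hxz : x ≠ z) (hyz : y ≠ z) :
    ({x, y, z} : Finset V).card = 3 := by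
  rw [Finset.card_insert_of_notMem (by simp [hxy, hxz]),
    Finset.card_insert_of_notMem (by simp [hyz]), Finset.card_singleton]

lemma card4' {a b c d : V} (hab : a ≠ b) (hac : a ≠ c) (had : a ≠ d)
    (hbc : b ≠ c) (hbd : b ≠ d) (hcd : c ≠ d) :
    ({a, b, c, d} : Finset V).card = 4 := by
  rw [Finset.card_insert_of_notMem (by simp [hab, hac, had]), card3 hbc hbd hcd]

/-! ### `powersetCard 3` of a 4-element set -/

lemma powersetCard_three {a b c d : V} (hab : a ≠ b) (hac : a ≠ c) (had : a ≠ d)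
    (hbc : b ≠ c) (hbd : b ≠ d) (hcd : c ≠ d) :
    ({a, b, c, d} : Finset V).powersetCard 3
      = {({b,c,d} : Finset V), {a,c,d}, {a,b,d}, {a,b,c}} := by
  ext t
  simp only [Finset.mem_powersetCard, Finset.mem_insert, Finset.mem_singleton]
  constructor
  · rintro ⟨hsub, hcard⟩
    have hc4 : ({a, b, c, d} : Finset V).card = 4 := card4' hab hac had hbc hbd hcd
    have hdiff : (({a, b, c, d} : Finset V) \ t).card = 1 := by
      rw [Finset.card_sdiff_of_subset hsub, hc4, hcard]
    obtain ⟨x, hx⟩ := Finset.card_eq_one.mp hdiff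
    have hxmem : x ∈ ({a, b, c, d} : Finset V) := by
      have : x ∈ ({a, b, c, d} : Finset V) \ t := by rw [hx]; exact Finset.mem_singleton_self x
      exact (Finset.mem_sdiff.mp this).1
    have ht : t = ({a, b, c, d} : Finset V) \ {x} := by
      rw [← hx, Finset.sdiff_sdiff_eq_self hsub]
    simp only [Finset.mem_insert, Finset.mem_singleton] at hxmem
    rcases hxmem with rfl | rfl | rfl | rfl
    · left; rw [ht]; ext v
      simp only [Finset.mem_sdiff, Finset.mem_insert, Finset.mem_singleton]
      constructor
      · rintro ⟨h1 | h1 | h1 | h1, h2⟩ <;> simp_all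
      · rintro (rfl | rfl | rfl) <;> exact ⟨by simp, by tauto⟩
    · right; left; rw [ht]; ext v
      simp only [Finset.mem_sdiff, Finset.mem_insert, Finset.mem_singleton]
      constructor
      · rintro ⟨h1 | h1 | h1 | h1, h2⟩ <;> simp_all
      · rintro (rfl | rfl | rfl) <;> exact ⟨by simp, by tauto⟩
    · right; right; left; rw [ht]; ext v
      simp only [Finset.mem_sdiff, Finset.mem_insert, Finset.mem_singleton]
      constructor
      · rintro ⟨h1 | h1 | h1 | h1, h2⟩ <;> simp_all
      · rintro (rfl | rfl | rfl) <;> exact ⟨by simp, by tauto⟩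
    · right; right; right; rw [ht]; ext v
      simp only [Finset.mem_sdiff, Finset.mem_insert, Finset.mem_singleton]
      constructor
      · rintro ⟨h1 | h1 | h1 | h1, h2⟩ <;> simp_all
      · rintro (rfl | rfl | rfl) <;> exact ⟨by simp, by tauto⟩
  · rintro (rfl | rfl | rfl | rfl)
    · exact ⟨by intro v hv; simp only [Finset.mem_insert, Finset.mem_singleton] at hv ⊢; tauto,
        card3 hbc hbd hcd⟩
    · exact ⟨by intro v hv; simp only [Finset.mem_insert, Finset.mem_singleton] at hv ⊢; tauto,
        card3 hac had hcd⟩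
    · exact ⟨by intro v hv; simp only [Finset.mem_insert, Finset.mem_singleton] at hv ⊢; tauto,
        card3 hab had hbd⟩
    · exact ⟨by intro v hv; simp only [Finset.mem_insert, Finset.mem_singleton] at hv ⊢; tauto,
        card3 hab hac hbc⟩

/-- number of 3-cycles among the four triples of `{a,b,c,d}` -/
def cntN (T : V → V → Bool) (a b c d : V) : ℕ :=
  (if cyc3 T b c d then 1 else 0) + (if cyc3 T a c d then 1 else 0)
    + (if cyc3 T a b d then 1 else 0) + (if cyc3 T a b c then 1 else 0)

lemma count_triples {T : V → V → Bool} (hT : IsTournament T) {a b c d : V}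
    (hab : a ≠ b) (hac : a ≠ c) (had : a ≠ d)
    (hbc : b ≠ c) (hbd : b ≠ d) (hcd : c ≠ d) :
    ((({a,b,c,d} : Finset V).powersetCard 3).filter fun t =>
        ∀ v ∈ t, (t.filter fun w => T v w).card = 1).card = cntN T a b c d := by
  have hna : a ∉ ({b,c,d} : Finset V) := by simp [hab, hac, had]
  have hnb : b ∉ ({a,c,d} : Finset V) := by simp; exact ⟨Ne.symm hab, hbc, hbd⟩
  have hnc : c ∉ ({a,b,d} : Finset V) := by simp; exact ⟨Ne.symm hac, Ne.symm hbc, hcd⟩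
  have n1 : ({b,c,d} : Finset V) ≠ {a,c,d} := by intro h; apply hna; rw [h]; simp
  have n2 : ({b,c,d} : Finset V) ≠ {a,b,d} := by intro h; apply hna; rw [h]; simp
  have n3 : ({b,c,d} : Finset V) ≠ {a,b,c} := by intro h; apply hna; rw [h]; simp
  have n4 : ({a,c,d} : Finset V) ≠ {a,b,d} := by intro h; apply hnb; rw [h]; simp
  have n5 : ({a,c,d} : Finset V) ≠ {a,b,c} := by intro h; apply hnb; rw [h]; simp
  have n6 : ({a,b,d} : Finset V) ≠ {a,b,c} := by intro h; apply hnc; rw [h]; simp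
  rw [powersetCard_three hab hac had hbc hbd hcd, Finset.card_filter]
  rw [show ({({b,c,d} : Finset V), {a,c,d}, {a,b,d}, {a,b,c}} : Finset (Finset V))
      = insert {b,c,d} (insert {a,c,d} (insert {a,b,d} ({{a,b,c}} : Finset (Finset V)))) from rfl]
  rw [Finset.sum_insert (by simp [n1, n2, n3]), Finset.sum_insert (by simp [n4, n5]),
    Finset.sum_insert (by simp [n6]), Finset.sum_singleton]
  rw [if_congr (cyc_iff hT hbc hbd hcd) rfl rfl, if_congr (cyc_iff hT hac had hcd) rfl rfl,
    if_congr (cyc_iff hT hab had hbd) rfl rfl, if_congr (cyc_iff hT hab hac hbc) rfl rfl]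
  simp [cntN, add_assoc]

/-! ### distinct 4-tuples -/

def dtuple (x : V × V × V × V) : Prop :=
  x.1 ≠ x.2.1 ∧ x.1 ≠ x.2.2.1 ∧ x.1 ≠ x.2.2.2 ∧ x.2.1 ≠ x.2.2.1 ∧ x.2.1 ≠ x.2.2.2
    ∧ x.2.2.1 ≠ x.2.2.2

instance : DecidablePred (dtuple (V := V)) := fun x => by unfold dtuple; infer_instance

def fset (x : V × V × V × V) : Finset V := {x.1, x.2.1, x.2.2.1, x.2.2.2}

lemma fiber_card (y : Finset V) (hy : y.card = 4) :
    (((Finset.univ : Finset (V × V × V × V)).filter dtuple).filter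
      fun x => fset x = y).card = 24 := by
  have : Fintype.card (Fin 4 ↪ ↥y) = 24 := by
    rw [Fintype.card_embedding_eq, Fintype.card_coe, hy, Fintype.card_fin]
    rfl
  rw [← this, ← Finset.card_univ]
  symm
  apply Finset.card_bij (fun (g : Fin 4 ↪ ↥y) _ =>
    (((g 0 : V), ((g 1 : V), ((g 2 : V), (g 3 : V))))))
  · intro g _
    have hne : ∀ p q : Fin 4, p ≠ q → (g p : V) ≠ (g q : V) := fun p q h =>
      fun hc => h (g.injective (Subtype.ext hc))
    have hsub : ({(g 0 : V), (g 1 : V), (g 2 : V), (g 3 : V)} : Finset V) ⊆ y := by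
      intro v hv
      simp only [Finset.mem_insert, Finset.mem_singleton] at hv
      rcases hv with rfl | rfl | rfl | rfl <;> exact (g _).2
    have hceq : ({(g 0 : V), (g 1 : V), (g 2 : V), (g 3 : V)} : Finset V) = y := by
      apply Finset.eq_of_subset_of_card_le hsub
      rw [hy, card4' (hne 0 1 (by decide)) (hne 0 2 (by decide)) (hne 0 3 (by decide))
        (hne 1 2 (by decide)) (hne 1 3 (by decide)) (hne 2 3 (by decide))]
    simp only [Finset.mem_filter, Finset.mem_univ, true_and]
    exact ⟨⟨hne 0 1 (by decide), hne 0 2 (by decide), hne 0 3 (by decide),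
      hne 1 2 (by decide), hne 1 3 (by decide), hne 2 3 (by decide)⟩, hceq⟩
  · intro g _ g' _ h
    simp only [Prod.mk.injEq] at h
    obtain ⟨h0, h1, h2, h3⟩ := h
    apply DFunLike.ext
    intro p
    fin_cases p
    · exact Subtype.ext h0
    · exact Subtype.ext h1
    · exact Subtype.ext h2
    · exact Subtype.ext h3
  · rintro ⟨a, b, c, d⟩ hx
    simp only [Finset.mem_filter, Finset.mem_univ, true_and] at hx
    obtain ⟨⟨hab, hac, had, hbc, hbd, hcd⟩, hfx⟩ := hx
    have ha : a ∈ y := by rw [← hfx]; simp [fset]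
    have hb : b ∈ y := by rw [← hfx]; simp [fset]
    have hc : c ∈ y := by rw [← hfx]; simp [fset]
    have hd : d ∈ y := by rw [← hfx]; simp [fset]
    have hinj : Function.Injective (![⟨a, ha⟩, ⟨b, hb⟩, ⟨c, hc⟩, ⟨d, hd⟩] : Fin 4 → ↥y) := by
      intro p q hpq
      fin_cases p <;> fin_cases q <;> simp_all [Subtype.ext_iff] <;> rfl
    refine ⟨⟨![⟨a, ha⟩, ⟨b, hb⟩, ⟨c, hc⟩, ⟨d, hd⟩], hinj⟩, Finset.mem_univ _, ?_⟩
    simp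

/-! ### sums over distinct tuples -/

lemma erase_sum (s : Finset V) (a : V) (f : V → ℤ) :
    ∑ x ∈ s.erase a, f x = ∑ x ∈ s, if x ≠ a then f x else 0 := by
  rw [← Finset.filter_ne', Finset.sum_filter]

lemma ite_sum (P : Prop) [Decidable P] (u : Finset V) (f : V → ℤ) :
    (if P then (∑ x ∈ u, f x) else 0) = ∑ x ∈ u, if P then f x else 0 := by
  split_ifs <;> simp

lemma sum_D4 (g : V → V → V → V → ℤ) :
    ∑ x ∈ Finset.univ.filter (dtuple (V := V)), g x.1 x.2.1 x.2.2.1 x.2.2.2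
      = ∑ a, ∑ b ∈ Finset.univ.erase a, ∑ c ∈ (Finset.univ.erase a).erase b,
          ∑ d ∈ ((Finset.univ.erase a).erase b).erase c, g a b c d := by
  rw [Finset.sum_filter]
  simp only [Fintype.sum_prod_type, erase_sum, ite_sum]
  refine Finset.sum_congr rfl fun a _ => Finset.sum_congr rfl fun b _ =>
    Finset.sum_congr rfl fun c _ => Finset.sum_congr rfl fun d _ => ?_
  unfold dtuple
  by_cases h1 : a = b <;> by_cases h2 : a = c <;> by_cases h3 : a = d <;>
    by_cases h4 : b = c <;> by_cases h5 : b = d <;> by_cases h6 : c = d <;> simp_all [eq_comm]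

lemma card_D4 :
    (∑ x ∈ Finset.univ.filter (dtuple (V := V)), (1 : ℤ))
      = (Fintype.card V : ℤ) * ((Fintype.card V : ℤ) - 1) * ((Fintype.card V : ℤ) - 2)
        * ((Fintype.card V : ℤ) - 3) := by
  have hrw := sum_D4 (V := V) (fun _ _ _ _ => (1:ℤ))
  beta_reduce at hrw
  by_cases h4 : 4 ≤ Fintype.card V
  · rw [hrw]
    have step : ∀ (u : Finset V) (k : ℤ), (∑ _x ∈ u, k) = (u.card : ℤ) * k := by
      intro u k; rw [Finset.sum_const, nsmul_eq_mul]
    calc ∑ a : V, ∑ b ∈ Finset.univ.erase a, ∑ c ∈ (Finset.univ.erase a).erase b,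
          ∑ d ∈ ((Finset.univ.erase a).erase b).erase c, (1:ℤ)
        = ∑ a : V, ∑ b ∈ Finset.univ.erase a, ∑ c ∈ (Finset.univ.erase a).erase b,
            ((Fintype.card V : ℤ) - 3) := by
          refine Finset.sum_congr rfl fun a _ => Finset.sum_congr rfl fun b hb =>
            Finset.sum_congr rfl fun c hc => ?_
          rw [step, Finset.card_erase_of_mem hc, Finset.card_erase_of_mem hb,
            Finset.card_erase_of_mem (Finset.mem_univ a), Finset.card_univ, mul_one]
          omega
      _ = ∑ a : V, ∑ b ∈ Finset.univ.erase a,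
            ((Fintype.card V : ℤ) - 2) * ((Fintype.card V : ℤ) - 3) := by
          refine Finset.sum_congr rfl fun a _ => Finset.sum_congr rfl fun b hb => ?_
          rw [step, Finset.card_erase_of_mem hb,
            Finset.card_erase_of_mem (Finset.mem_univ a), Finset.card_univ]
          have : ((Fintype.card V - 1 - 1 : ℕ) : ℤ) = (Fintype.card V : ℤ) - 2 := by omega
          rw [this]
      _ = ∑ a : V, ((Fintype.card V : ℤ) - 1) * (((Fintype.card V : ℤ) - 2)
            * ((Fintype.card V : ℤ) - 3)) := by
          refine Finset.sum_congr rfl fun a _ => ?_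
          rw [step, Finset.card_erase_of_mem (Finset.mem_univ a), Finset.card_univ]
          have : ((Fintype.card V - 1 : ℕ) : ℤ) = (Fintype.card V : ℤ) - 1 := by omega
          rw [this]
      _ = _ := by
          rw [step, Finset.card_univ]; ring
  · have hlt : Fintype.card V < 4 := by omega
    have hempty : Finset.univ.filter (dtuple (V := V)) = ∅ := by
      rw [Finset.filter_eq_empty_iff]
      rintro ⟨a, b, c, d⟩ _ hd
      obtain ⟨h1, h2, h3, h4', h5, h6⟩ := hd
      have : ({a, b, c, d} : Finset V).card ≤ Fintype.card V :=
        (Finset.card_le_card (Finset.subset_univ _)).trans_eq Finset.card_univ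
      rw [Finset.card_insert_of_notMem (by simp [h1, h2, h3]),
        Finset.card_insert_of_notMem (by simp [h4', h5]),
        Finset.card_insert_of_notMem (by simp [h6]), Finset.card_singleton] at this
      omega
    rw [hempty, Finset.sum_empty]
    interval_cases h : Fintype.card V <;> norm_num

lemma card_D2 :
    (∑ i : V, ∑ _j ∈ (Finset.univ : Finset V).erase i, (1 : ℤ))
      = (Fintype.card V : ℤ) * ((Fintype.card V : ℤ) - 1) := by
  have h : ∀ i : V, (∑ _j ∈ (Finset.univ : Finset V).erase i, (1:ℤ))
      = ((Fintype.card V - 1 : ℕ) : ℤ) := by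
    intro i
    rw [Finset.sum_const, Finset.card_erase_of_mem (Finset.mem_univ i), Finset.card_univ,
      nsmul_eq_mul, mul_one]
  rw [Finset.sum_congr rfl (fun i _ => h i), Finset.sum_const, Finset.card_univ, nsmul_eq_mul]
  rcases Nat.eq_zero_or_pos (Fintype.card V) with h0 | h0
  · rw [h0]; norm_num
  · have he : ((Fintype.card V - 1 : ℕ) : ℤ) = (Fintype.card V : ℤ) - 1 := by omega
    rw [he]

lemma card_D3 :
    (∑ i : V, ∑ j ∈ (Finset.univ : Finset V).erase i,
        ∑ k ∈ ((Finset.univ : Finset V).erase i).erase j, (1 : ℤ))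
      = (Fintype.card V : ℤ) * ((Fintype.card V : ℤ) - 1) * ((Fintype.card V : ℤ) - 2) := by
  by_cases h2 : 2 ≤ Fintype.card V
  · calc (∑ i : V, ∑ j ∈ (Finset.univ : Finset V).erase i,
          ∑ _k ∈ ((Finset.univ : Finset V).erase i).erase j, (1 : ℤ))
        = ∑ i : V, ∑ _j ∈ (Finset.univ : Finset V).erase i, ((Fintype.card V : ℤ) - 2) := by
          refine Finset.sum_congr rfl fun i _ => Finset.sum_congr rfl fun j hj => ?_
          rw [Finset.sum_const, Finset.card_erase_of_mem hj,
            Finset.card_erase_of_mem (Finset.mem_univ i), Finset.card_univ, nsmul_eq_mul, mul_one]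
          omega
      _ = ∑ _i : V, ((Fintype.card V : ℤ) - 1) * ((Fintype.card V : ℤ) - 2) := by
          refine Finset.sum_congr rfl fun i _ => ?_
          rw [Finset.sum_const, Finset.card_erase_of_mem (Finset.mem_univ i), Finset.card_univ,
            nsmul_eq_mul]
          have he : ((Fintype.card V - 1 : ℕ) : ℤ) = (Fintype.card V : ℤ) - 1 := by omega
          rw [he]
      _ = _ := by
          rw [Finset.sum_const, Finset.card_univ, nsmul_eq_mul]; ring
  · have hempty : ∀ i : V, (Finset.univ : Finset V).erase i = ∅ := by
      intro i
      rw [← Finset.card_eq_zero, Finset.card_erase_of_mem (Finset.mem_univ i), Finset.card_univ]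
      omega
    have hlt : Fintype.card V < 2 := by omega
    simp only [hempty, Finset.sum_empty, Finset.sum_const, Finset.card_univ, nsmul_eq_mul,
      mul_zero]
    interval_cases h : Fintype.card V <;> norm_num

/-! ### reindexing sums over distinct tuples -/

lemma sum_D4_reindex (F : V × V × V × V → ℤ) (σ τ : V × V × V × V → V × V × V × V)
    (hστ : ∀ x, dtuple x → τ (σ x) = x) (hτσ : ∀ x, dtuple x → σ (τ x) = x)
    (hσ : ∀ x, dtuple x → dtuple (σ x)) (hτ : ∀ x, dtuple x → dtuple (τ x)) :
    ∑ x ∈ Finset.univ.filter (dtuple (V := V)), F (σ x)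
      = ∑ x ∈ Finset.univ.filter (dtuple (V := V)), F x := by
  apply Finset.sum_nbij' (i := σ) (j := τ)
  · intro a ha
    simp only [Finset.mem_filter, Finset.mem_univ, true_and] at ha ⊢
    exact hσ a ha
  · intro a ha
    simp only [Finset.mem_filter, Finset.mem_univ, true_and] at ha ⊢
    exact hτ a ha
  · intro a ha
    simp only [Finset.mem_filter, Finset.mem_univ, true_and] at ha
    exact hστ a ha
  · intro a ha
    simp only [Finset.mem_filter, Finset.mem_univ, true_and] at ha
    exact hτσ a ha
  · intro a _; rfl

def sig1 (x : V × V × V × V) : V × V × V × V := (x.2.2.2, x.2.1, x.1, x.2.2.1)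
def tau1 (x : V × V × V × V) : V × V × V × V := (x.2.2.1, x.2.1, x.2.2.2, x.1)
def sig2 (x : V × V × V × V) : V × V × V × V := (x.2.2.1, x.2.1, x.1, x.2.2.2)
def sig3 (x : V × V × V × V) : V × V × V × V := (x.2.2.2, x.2.2.1, x.1, x.2.1)
def tau3 (x : V × V × V × V) : V × V × V × V := (x.2.2.1, x.2.2.2, x.2.1, x.1)

lemma reindex1 (F : V × V × V × V → ℤ) :
    ∑ x ∈ Finset.univ.filter (dtuple (V := V)), F (sig1 x)
      = ∑ x ∈ Finset.univ.filter (dtuple (V := V)), F x := by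
  apply sum_D4_reindex F sig1 tau1
  · rintro ⟨a, b, c, d⟩ _; rfl
  · rintro ⟨a, b, c, d⟩ _; rfl
  · rintro ⟨a, b, c, d⟩ ⟨h12, h13, h14, h23, h24, h34⟩
    exact ⟨h24.symm, h14.symm, h34.symm, h12.symm, h23, h13⟩
  · rintro ⟨a, b, c, d⟩ ⟨h12, h13, h14, h23, h24, h34⟩
    exact ⟨h23.symm, h34, h13.symm, h24, h12.symm, h14.symm⟩

lemma reindex2 (F : V × V × V × V → ℤ) :
    ∑ x ∈ Finset.univ.filter (dtuple (V := V)), F (sig2 x)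
      = ∑ x ∈ Finset.univ.filter (dtuple (V := V)), F x := by
  apply sum_D4_reindex F sig2 sig2
  · rintro ⟨a, b, c, d⟩ _; rfl
  · rintro ⟨a, b, c, d⟩ _; rfl
  · rintro ⟨a, b, c, d⟩ ⟨h12, h13, h14, h23, h24, h34⟩
    exact ⟨h23.symm, h13.symm, h34, h12.symm, h24, h14⟩
  · rintro ⟨a, b, c, d⟩ ⟨h12, h13, h14, h23, h24, h34⟩
    exact ⟨h23.symm, h13.symm, h34, h12.symm, h24, h14⟩

lemma reindex3 (F : V × V × V × V → ℤ) :
    ∑ x ∈ Finset.univ.filter (dtuple (V := V)), F (sig3 x)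
      = ∑ x ∈ Finset.univ.filter (dtuple (V := V)), F x := by
  apply sum_D4_reindex F sig3 tau3
  · rintro ⟨a, b, c, d⟩ _; rfl
  · rintro ⟨a, b, c, d⟩ _; rfl
  · rintro ⟨a, b, c, d⟩ ⟨h12, h13, h14, h23, h24, h34⟩
    exact ⟨h34.symm, h14.symm, h24.symm, h13.symm, h23.symm, h12⟩
  · rintro ⟨a, b, c, d⟩ ⟨h12, h13, h14, h23, h24, h34⟩
    exact ⟨h34, h23.symm, h13.symm, h24.symm, h14.symm, h12.symm⟩

/-! ### the pointwise identity on 4 distinct vertices -/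

lemma pointwise {T : V → V → Bool} (hT : IsTournament T) {a b c d : V}
    (hab : a ≠ b) (hac : a ≠ c) (had : a ≠ d)
    (hbc : b ≠ c) (hbd : b ≠ d) (hcd : c ≠ d) :
    seidel T a b * seidel T b c * seidel T c d * seidel T d a
      + seidel T a b * seidel T b d * seidel T d c * seidel T c a
      + seidel T a c * seidel T c b * seidel T b d * seidel T d a
      = 1 - 4 * (if cntN T a b c d = 1 then (1:ℤ) else 0) := by
  have e1 := hT.2 b a hab.symm
  have e2 := hT.2 c a hac.symm
  have e3 := hT.2 d a had.symm
  have e4 := hT.2 c b hbc.symm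
  have e5 := hT.2 d b hbd.symm
  have e6 := hT.2 d c hcd.symm
  rw [seidel_eq hT hab, seidel_eq hT hbc, seidel_eq hT hcd, seidel_eq hT had.symm,
    seidel_eq hT hbd, seidel_eq hT hcd.symm, seidel_eq hT hac.symm, seidel_eq hT hac,
    seidel_eq hT hbc.symm]
  rcases h1 : T a b <;> rcases h2 : T a c <;> rcases h3 : T a d <;>
    rcases h4 : T b c <;> rcases h5 : T b d <;> rcases h6 : T c d <;>
    simp_all [cntN, cyc3]

/-! ### grouping distinct 4-tuples by their underlying set -/

lemma group_dia {T : V → V → Bool} (hT : IsTournament T) :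
    ∑ x ∈ Finset.univ.filter (dtuple (V := V)),
        (if cntN T x.1 x.2.1 x.2.2.1 x.2.2.2 = 1 then (1:ℤ) else 0)
      = 24 * (numDiamonds T : ℤ) := by
  have hmaps : ∀ x ∈ Finset.univ.filter (dtuple (V := V)),
      fset x ∈ Finset.univ.powersetCard 4 := by
    rintro ⟨a, b, c, d⟩ hx
    simp only [Finset.mem_filter, Finset.mem_univ, true_and] at hx
    obtain ⟨h12, h13, h14, h23, h24, h34⟩ := hx
    rw [Finset.mem_powersetCard]
    exact ⟨Finset.subset_univ _, card4' h12 h13 h14 h23 h24 h34⟩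
  rw [← Finset.sum_fiberwise_of_maps_to hmaps]
  have inner : ∀ y ∈ Finset.univ.powersetCard 4,
      (∑ x ∈ (Finset.univ.filter (dtuple (V := V))).filter (fun x => fset x = y),
        (if cntN T x.1 x.2.1 x.2.2.1 x.2.2.2 = 1 then (1:ℤ) else 0))
      = 24 * (if ((y.powersetCard 3).filter fun t =>
          ∀ v ∈ t, (t.filter fun w => T v w).card = 1).card = 1 then (1:ℤ) else 0) := by
    intro y hy
    have hy4 : y.card = 4 := (Finset.mem_powersetCard.mp hy).2
    calc (∑ x ∈ (Finset.univ.filter (dtuple (V := V))).filter (fun x => fset x = y),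
            (if cntN T x.1 x.2.1 x.2.2.1 x.2.2.2 = 1 then (1:ℤ) else 0))
        = ∑ _x ∈ (Finset.univ.filter (dtuple (V := V))).filter (fun x => fset x = y),
            (if ((y.powersetCard 3).filter fun t =>
              ∀ v ∈ t, (t.filter fun w => T v w).card = 1).card = 1 then (1:ℤ) else 0) := by
          refine Finset.sum_congr rfl ?_
          rintro ⟨a, b, c, d⟩ hx
          simp only [Finset.mem_filter, Finset.mem_univ, true_and] at hx
          obtain ⟨⟨h12, h13, h14, h23, h24, h34⟩, hfx⟩ := hx
          have hc : cntN T a b c d = ((y.powersetCard 3).filter fun t =>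
              ∀ v ∈ t, (t.filter fun w => T v w).card = 1).card := by
            rw [← hfx]
            exact (count_triples hT h12 h13 h14 h23 h24 h34).symm
          rw [hc]
      _ = _ := by
          rw [Finset.sum_const, fiber_card y hy4, nsmul_eq_mul]
          norm_num
  rw [Finset.sum_congr rfl inner, ← Finset.mul_sum]
  congr 1
  rw [Finset.sum_boole]
  rfl

/-! ### expanding the sum of squares of the off-diagonal entries -/

lemma sum_M_sq {T : V → V → Bool} (hT : IsTournament T) :
    (∑ i : V, ∑ j ∈ (Finset.univ : Finset V).erase i,
        (∑ k : V, seidel T i k * seidel T k j) ^ 2)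
      = (Fintype.card V : ℤ) * ((Fintype.card V : ℤ) - 1) * ((Fintype.card V : ℤ) - 2)
        + ∑ x ∈ Finset.univ.filter (dtuple (V := V)),
            seidel T x.1 x.2.2.1 * seidel T x.2.2.1 x.2.1
              * (seidel T x.1 x.2.2.2 * seidel T x.2.2.2 x.2.1) := by
  rw [sum_D4 (fun i j k l => seidel T i k * seidel T k j * (seidel T i l * seidel T l j))]
  rw [← card_D3, ← Finset.sum_add_distrib]
  refine Finset.sum_congr rfl fun i _ => ?_
  rw [← Finset.sum_add_distrib]
  refine Finset.sum_congr rfl fun j hj => ?_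
  have hij : j ≠ i := (Finset.mem_erase.mp hj).1
  have h0i : (fun k => seidel T i k * seidel T k j) i = 0 := by simp [seidel_diag]
  have h0j : (fun k => seidel T i k * seidel T k j) j = 0 := by simp [seidel_diag]
  have restrict : (∑ k : V, seidel T i k * seidel T k j)
      = ∑ k ∈ ((Finset.univ : Finset V).erase i).erase j, seidel T i k * seidel T k j :=
    calc (∑ k : V, seidel T i k * seidel T k j)
        = ∑ k ∈ (Finset.univ : Finset V).erase i, seidel T i k * seidel T k j :=
          (Finset.sum_erase (f := fun k => seidel T i k * seidel T k j) _ h0i).symm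
      _ = ∑ k ∈ ((Finset.univ : Finset V).erase i).erase j, seidel T i k * seidel T k j :=
          (Finset.sum_erase (f := fun k => seidel T i k * seidel T k j) _ h0j).symm
  rw [sq, restrict, Finset.sum_mul_sum]
  rw [Finset.sum_congr rfl (fun k hk => (Finset.add_sum_erase _
      (fun l => seidel T i k * seidel T k j * (seidel T i l * seidel T l j)) hk).symm)]
  rw [Finset.sum_add_distrib]
  congr 1
  refine Finset.sum_congr rfl fun k hk => ?_
  have hki : k ≠ i := (Finset.mem_erase.mp (Finset.mem_of_mem_erase hk)).1
  have hkj : k ≠ j := (Finset.mem_erase.mp hk).1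
  rw [mul_mul_mul_comm, seidel_mul_self hT (Ne.symm hki), seidel_mul_self hT hkj, one_mul]

/-! ### matrix entries of S² + m·I -/

lemma M_apply_off (T : V → V → Bool) (m : ℤ) {i j : V} (h : i ≠ j) :
    (seidel T ^ 2 + m • (1 : Matrix V V ℤ)) i j = ∑ k, seidel T i k * seidel T k j := by
  rw [sq, Matrix.add_apply, Matrix.smul_apply, Matrix.one_apply_ne h, Matrix.mul_apply]
  simp

lemma M_apply_diag {T : V → V → Bool} (hT : IsTournament T) (m : ℤ) (i : V) :
    (seidel T ^ 2 + m • (1 : Matrix V V ℤ)) i i = m - ((Fintype.card V : ℤ) - 1) := by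
  rw [sq, Matrix.add_apply, Matrix.smul_apply, Matrix.one_apply_eq, Matrix.mul_apply]
  have h0 : (fun k => seidel T i k * seidel T k i) i = 0 := by simp [seidel_diag]
  rw [← Finset.sum_erase (f := fun k => seidel T i k * seidel T k i) _ h0]
  rw [Finset.sum_congr rfl (fun k hk => seidel_mul_rev hT (Finset.mem_erase.mp hk).1.symm)]
  rw [Finset.sum_const, Finset.card_erase_of_mem (Finset.mem_univ i), Finset.card_univ]
  have h1 : 1 ≤ Fintype.card V := Fintype.card_pos_iff.mpr ⟨i⟩
  have he : ((Fintype.card V - 1 : ℕ) : ℤ) = (Fintype.card V : ℤ) - 1 := by omega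
  rw [nsmul_eq_mul, he, smul_eq_mul, mul_one]
  ring

lemma M_off_ne_zero {T : V → V → Bool} (hT : IsTournament T)
    (hodd : Odd (Fintype.card V)) {i j : V} (h : i ≠ j) :
    (∑ k, seidel T i k * seidel T k j) ≠ 0 := by
  intro h0
  have hcast : ((∑ k, seidel T i k * seidel T k j : ℤ) : ZMod 2) = 0 := by rw [h0]; rfl
  push_cast at hcast
  have h0i : ((fun k => ((seidel T i k : ZMod 2) * (seidel T k j : ZMod 2)))) i = 0 := by
    simp [seidel_diag]
  have h0j : ((fun k => ((seidel T i k : ZMod 2) * (seidel T k j : ZMod 2)))) j = 0 := by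
    simp [seidel_diag]
  rw [← Finset.sum_erase (f := fun k => ((seidel T i k : ℤ) : ZMod 2)
        * ((seidel T k j : ℤ) : ZMod 2)) _ h0i,
      ← Finset.sum_erase (f := fun k => ((seidel T i k : ℤ) : ZMod 2)
        * ((seidel T k j : ℤ) : ZMod 2)) _ h0j] at hcast
  rw [Finset.sum_congr rfl (fun k hk => ?_)] at hcast
  rotate_left
  · exact fun _ => (1 : ZMod 2)
  · have hki : k ≠ i := (Finset.mem_erase.mp (Finset.mem_of_mem_erase hk)).1
    have hkj : k ≠ j := (Finset.mem_erase.mp hk).1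
    rw [seidel_eq hT (Ne.symm hki), seidel_eq hT hkj]
    rcases h1 : T i k <;> rcases h2 : T k j <;> simp <;> decide
  rw [Finset.sum_const, Finset.card_erase_of_mem
      (Finset.mem_erase.mpr ⟨Ne.symm h, Finset.mem_univ j⟩),
    Finset.card_erase_of_mem (Finset.mem_univ i), Finset.card_univ] at hcast
  have h2 : 2 ≤ Fintype.card V := by
    have : ({i, j} : Finset V).card ≤ Fintype.card V := by
      rw [← Finset.card_univ]; exact Finset.card_le_card (Finset.subset_univ _)
    rw [Finset.card_insert_of_notMem (by simp [h]), Finset.card_singleton] at this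
    omega
  obtain ⟨m, hm⟩ := hodd
  have hcard : Fintype.card V - 1 - 1 = 2 * (m - 1) + 1 := by omega
  rw [hcard] at hcast
  simp only [nsmul_eq_mul, mul_one, Nat.cast_add, Nat.cast_mul, Nat.cast_ofNat,
    Nat.cast_one] at hcast
  have h22 : ((2 : ZMod 2)) = 0 := rfl
  rw [h22, zero_mul, zero_add] at hcast
  exact one_ne_zero hcast

lemma int_sq_ge_one {m : ℤ} (hm : m ≠ 0) : 1 ≤ m ^ 2 := by
  have h1 : 1 ≤ |m| := Int.one_le_abs hm
  calc (1 : ℤ) = 1 * 1 := by ring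
    _ ≤ |m| * |m| := mul_le_mul h1 h1 (by norm_num) (abs_nonneg m)
    _ = m ^ 2 := by rw [← sq_abs]; ring

lemma int_sq_eq_one_iff (m : ℤ) : m ^ 2 = 1 ↔ |m| = 1 := by
  constructor
  · intro h
    have : (m - 1) * (m + 1) = 0 := by linear_combination h
    rcases mul_eq_zero.mp this with h1 | h1
    · rw [show m = 1 by linarith]; rfl
    · rw [show m = -1 by linarith]; rfl
  · intro h
    rcases (abs_eq (by norm_num : (0:ℤ) ≤ 1)).mp h with rfl | rfl <;> norm_num

/-! ### the key integer identity -/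

lemma key_identity {T : V → V → Bool} (hT : IsTournament T) :
    96 * (numDiamonds T : ℤ)
      + 3 * ∑ i : V, ∑ j ∈ (Finset.univ : Finset V).erase i,
          ((∑ k : V, seidel T i k * seidel T k j) ^ 2 - 1)
      = (Fintype.card V : ℤ) * ((Fintype.card V : ℤ) - 1) * ((Fintype.card V : ℤ) - 3)
        * ((Fintype.card V : ℤ) + 1) := by
  have hE : (∑ i : V, ∑ j ∈ (Finset.univ : Finset V).erase i,
        ((∑ k : V, seidel T i k * seidel T k j) ^ 2 - 1))
      = (∑ i : V, ∑ j ∈ (Finset.univ : Finset V).erase i,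
        (∑ k : V, seidel T i k * seidel T k j) ^ 2)
        - (Fintype.card V : ℤ) * ((Fintype.card V : ℤ) - 1) := by
    rw [← card_D2 (V := V)]
    simp only [Finset.sum_sub_distrib]
  set R' : V × V × V × V → ℤ := fun x =>
    seidel T x.1 x.2.2.1 * seidel T x.2.2.1 x.2.1
      * (seidel T x.1 x.2.2.2 * seidel T x.2.2.2 x.2.1) with hR'
  have hp1 : (∑ x ∈ Finset.univ.filter (dtuple (V := V)),
      seidel T x.1 x.2.1 * seidel T x.2.1 x.2.2.1 * seidel T x.2.2.1 x.2.2.2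
        * seidel T x.2.2.2 x.1)
      = ∑ x ∈ Finset.univ.filter (dtuple (V := V)), R' x := by
    rw [← reindex1 R']
    refine Finset.sum_congr rfl ?_
    rintro ⟨a, b, c, d⟩ _
    simp only [hR', sig1]
    rw [seidel_anti hT c d, seidel_anti hT b c]
    ring
  have hp2 : (∑ x ∈ Finset.univ.filter (dtuple (V := V)),
      seidel T x.1 x.2.1 * seidel T x.2.1 x.2.2.2 * seidel T x.2.2.2 x.2.2.1
        * seidel T x.2.2.1 x.1)
      = ∑ x ∈ Finset.univ.filter (dtuple (V := V)), R' x := by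
    rw [← reindex2 R']
    refine Finset.sum_congr rfl ?_
    rintro ⟨a, b, c, d⟩ _
    simp only [hR', sig2]
    rw [seidel_anti hT d c, seidel_anti hT b d]
    ring
  have hp3 : (∑ x ∈ Finset.univ.filter (dtuple (V := V)),
      seidel T x.1 x.2.2.1 * seidel T x.2.2.1 x.2.1 * seidel T x.2.1 x.2.2.2
        * seidel T x.2.2.2 x.1)
      = ∑ x ∈ Finset.univ.filter (dtuple (V := V)), R' x := by
    rw [← reindex3 R']
    refine Finset.sum_congr rfl ?_
    rintro ⟨a, b, c, d⟩ _
    simp only [hR', sig3]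
    rw [seidel_anti hT b d, seidel_anti hT c b]
    ring
  have hsum : (∑ x ∈ Finset.univ.filter (dtuple (V := V)),
      (seidel T x.1 x.2.1 * seidel T x.2.1 x.2.2.1 * seidel T x.2.2.1 x.2.2.2
          * seidel T x.2.2.2 x.1
        + seidel T x.1 x.2.1 * seidel T x.2.1 x.2.2.2 * seidel T x.2.2.2 x.2.2.1
          * seidel T x.2.2.1 x.1
        + seidel T x.1 x.2.2.1 * seidel T x.2.2.1 x.2.1 * seidel T x.2.1 x.2.2.2
          * seidel T x.2.2.2 x.1))
      = ∑ x ∈ Finset.univ.filter (dtuple (V := V)),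
          (1 - 4 * (if cntN T x.1 x.2.1 x.2.2.1 x.2.2.2 = 1 then (1:ℤ) else 0)) := by
    refine Finset.sum_congr rfl ?_
    rintro ⟨a, b, c, d⟩ hx
    simp only [Finset.mem_filter, Finset.mem_univ, true_and] at hx
    obtain ⟨h12, h13, h14, h23, h24, h34⟩ := hx
    exact pointwise hT h12 h13 h14 h23 h24 h34
  have h3R : 3 * (∑ x ∈ Finset.univ.filter (dtuple (V := V)), R' x)
      = (Fintype.card V : ℤ) * ((Fintype.card V : ℤ) - 1) * ((Fintype.card V : ℤ) - 2)
          * ((Fintype.card V : ℤ) - 3)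
        - 96 * (numDiamonds T : ℤ) := by
    have lhs_eq : (∑ x ∈ Finset.univ.filter (dtuple (V := V)),
        (seidel T x.1 x.2.1 * seidel T x.2.1 x.2.2.1 * seidel T x.2.2.1 x.2.2.2
            * seidel T x.2.2.2 x.1
          + seidel T x.1 x.2.1 * seidel T x.2.1 x.2.2.2 * seidel T x.2.2.2 x.2.2.1
            * seidel T x.2.2.1 x.1
          + seidel T x.1 x.2.2.1 * seidel T x.2.2.1 x.2.1 * seidel T x.2.1 x.2.2.2
            * seidel T x.2.2.2 x.1))
        = 3 * (∑ x ∈ Finset.univ.filter (dtuple (V := V)), R' x) := by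
      rw [Finset.sum_add_distrib, Finset.sum_add_distrib, hp1, hp2, hp3]
      ring
    have rhs_eq : (∑ x ∈ Finset.univ.filter (dtuple (V := V)),
        (1 - 4 * (if cntN T x.1 x.2.1 x.2.2.1 x.2.2.2 = 1 then (1:ℤ) else 0)))
        = (Fintype.card V : ℤ) * ((Fintype.card V : ℤ) - 1) * ((Fintype.card V : ℤ) - 2)
            * ((Fintype.card V : ℤ) - 3)
          - 96 * (numDiamonds T : ℤ) := by
      rw [Finset.sum_sub_distrib, card_D4, ← Finset.mul_sum, group_dia hT]
      ring
    rw [← lhs_eq, hsum, rhs_eq]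
  rw [hE, sum_M_sq hT]
  linear_combination h3R

end Aux


/-- For `n` odd, `δ_T ≤ n(n−1)(n−3)(n+1)/96`, with equality iff every entry of
`S² + n·I_n` has absolute value 1, i.e. `|S² + n·I_n| = J_n`. -/
theorem stmt_12 {n : ℕ} (hn : Odd n) (T : Fin n → Fin n → Bool) (hT : IsTournament T) :
    (numDiamonds T : ℚ) ≤ (n : ℚ) * ((n : ℚ) - 1) * ((n : ℚ) - 3) * ((n : ℚ) + 1) / 96 ∧
      ((numDiamonds T : ℚ)
          = (n : ℚ) * ((n : ℚ) - 1) * ((n : ℚ) - 3) * ((n : ℚ) + 1) / 96 ↔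
        ∀ i j, |(seidel T ^ 2 + (n : ℤ) • (1 : Matrix (Fin n) (Fin n) ℤ)) i j| = 1) := by
  have hcard : Fintype.card (Fin n) = n := Fintype.card_fin n
  have hodd : Odd (Fintype.card (Fin n)) := by rw [hcard]; exact hn
  set E := ∑ i : Fin n, ∑ j ∈ (Finset.univ : Finset (Fin n)).erase i,
      ((∑ k : Fin n, seidel T i k * seidel T k j) ^ 2 - 1) with hEdef
  have key := key_identity hT
  rw [hcard] at key
  have hterm : ∀ i : Fin n, ∀ j ∈ (Finset.univ : Finset (Fin n)).erase i,
      (0:ℤ) ≤ (∑ k : Fin n, seidel T i k * seidel T k j) ^ 2 - 1 := by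
    intro i j hj
    have hji : j ≠ i := (Finset.mem_erase.mp hj).1
    have h1 := int_sq_ge_one (M_off_ne_zero hT hodd (Ne.symm hji))
    linarith
  have hE0 : 0 ≤ E := Finset.sum_nonneg fun i _ => Finset.sum_nonneg (hterm i)
  constructor
  · rw [le_div_iff₀ (show (0:ℚ) < 96 by norm_num)]
    have hZ : 96 * (numDiamonds T : ℤ)
        ≤ (n:ℤ) * ((n:ℤ) - 1) * ((n:ℤ) - 3) * ((n:ℤ) + 1) := by linarith
    have hQ := (@Int.cast_le ℚ _ _ _).mpr hZ
    push_cast at hQ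
    linarith
  · constructor
    · intro heq
      have hq : (numDiamonds T : ℚ) * 96
          = (n : ℚ) * ((n : ℚ) - 1) * ((n : ℚ) - 3) * ((n : ℚ) + 1) := by
        rw [heq]; field_simp
      have hz : 96 * (numDiamonds T : ℤ)
          = (n:ℤ) * ((n:ℤ) - 1) * ((n:ℤ) - 3) * ((n:ℤ) + 1) := by
        have h2 : ((96 * (numDiamonds T : ℤ) : ℤ) : ℚ)
            = (((n:ℤ) * ((n:ℤ) - 1) * ((n:ℤ) - 3) * ((n:ℤ) + 1) : ℤ) : ℚ) := by
          push_cast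
          linarith
        exact_mod_cast h2
      have hE0' : E = 0 := by linarith
      intro i j
      by_cases hij : i = j
      · subst hij
        rw [M_apply_diag hT _ i, hcard]
        rw [show (n:ℤ) - ((n:ℤ) - 1) = 1 by ring]
        rfl
      · have hall := (Finset.sum_eq_zero_iff_of_nonneg
          (fun i _ => Finset.sum_nonneg (hterm i))).mp hE0'
        have hinner := (Finset.sum_eq_zero_iff_of_nonneg (hterm i)).mp
          (hall i (Finset.mem_univ i)) j
          (Finset.mem_erase.mpr ⟨Ne.symm hij, Finset.mem_univ j⟩)
        rw [M_apply_off T _ hij]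
        rw [← int_sq_eq_one_iff]
        linarith
    · intro habs
      have hE0' : E = 0 := Finset.sum_eq_zero fun i _ => Finset.sum_eq_zero fun j hj => by
        have hji : j ≠ i := (Finset.mem_erase.mp hj).1
        have h1 := habs i j
        rw [M_apply_off T _ (Ne.symm hji)] at h1
        have h2 := (int_sq_eq_one_iff _).mpr h1
        linarith
      have hz : 96 * (numDiamonds T : ℤ)
          = (n:ℤ) * ((n:ℤ) - 1) * ((n:ℤ) - 3) * ((n:ℤ) + 1) := by linarith
      rw [eq_div_iff (show (96:ℚ) ≠ 0 by norm_num)]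
      have hQ := congrArg (fun z : ℤ => (z : ℚ)) hz
      push_cast at hQ
      linarith
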